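/- Let G be a finite undirected graph, 𝒯 ⊆ V(G) × V(G) a set of terminal pairs with terminal set T = ⋃_{(s,t)∈𝒯}{s,t}, X ⊆ V(G)∖T an independent set, and k ≥ 1 an integer. Suppose Z ⊆ V(G)∖(X ∪ T) with |Z| ≤ k is a multiway cut for X such that for every (s,t) ∈ 𝒯 there is no path from s to t in G − Z. Suppose further that (i) no vertex v ∈ V(G)∖X admits k+2 paths in G to pairwise distinct vertices of X that are pairwise vertex-disjoint except for v, and (ii) every connected component of G either contains both vertices of some pair of 𝒯 or contains at least two vertices of X. Then |X| ≤ k(k+1). -/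

import Mathlib

/-!
STATEMENT 8: let `G` be a finite undirected graph, `𝒯` a set of terminal pairs with
terminal set `T`, `X ⊆ V(G) ∖ T` an independent set, and `k ≥ 1`.  Suppose
`Z ⊆ V(G) ∖ (X ∪ T)` with `|Z| ≤ k` is a multiway cut for `X` such that no terminal
pair is connected in `G − Z`.  Suppose further that (i) no vertex `v ∉ X` admits
`k+2` paths in `G` to pairwise distinct vertices of `X` that are pairwise
vertex-disjoint except for `v`, and (ii) every connected component of `G` contains
both vertices of some pair of `𝒯`, or at least two vertices of `X`.
Then `|X| ≤ k(k+1)`.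
-/

variable {V : Type*}

/-- Reachability in the undirected graph `G` with the vertex set `S` removed. -/
def rAvoid (G : SimpleGraph V) (S : Set V) : V → V → Prop :=
  Relation.ReflTransGen fun a b => G.Adj a b ∧ a ∉ S ∧ b ∉ S

/-- The set `T` of all terminal vertices of the pairs in `𝒯`. -/
def termSet (𝒯 : Set (V × V)) : Set V :=
  {w | ∃ p ∈ 𝒯, w = p.1 ∨ w = p.2}

lemma rAvoid_symm {G : SimpleGraph V} {S : Set V} {a b : V} (h : rAvoid G S a b) :
    rAvoid G S b a := by
  induction h with
  | refl => exact .refl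
  | tail _ hstep ih =>
      exact Relation.ReflTransGen.trans
        (Relation.ReflTransGen.single ⟨hstep.1.symm, hstep.2.2, hstep.2.1⟩) ih

lemma rAvoid_notMem {G : SimpleGraph V} {S : Set V} {a b : V} (h : rAvoid G S a b)
    (ha : a ∉ S) : b ∉ S := by
  induction h with
  | refl => exact ha
  | tail _ hstep _ => exact hstep.2.2

lemma rAvoid_exists_walk {G : SimpleGraph V} {S : Set V} {a b : V} (h : rAvoid G S a b) :
    ∃ W : G.Walk a b, ∀ w ∈ W.support, rAvoid G S a w := by
  induction h with
  | refl => exact ⟨.nil, by intro w hw; simp at hw; subst hw; exact .refl⟩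
  | @tail b c hab hbc ih =>
      obtain ⟨W, hW⟩ := ih
      refine ⟨W.concat hbc.1, ?_⟩
      intro w hw
      rw [SimpleGraph.Walk.support_concat, List.mem_append, List.mem_singleton] at hw
      rcases hw with hw | hw
      · exact hW w hw
      · subst hw; exact hab.tail hbc

lemma attach_lemma {G : SimpleGraph V} {Z X : Set V} {𝒯 : Set (V × V)} {x : V}
    (hx : x ∈ X) (hxZ : x ∉ Z)
    (hmwc : ∀ a ∈ X, ∀ b ∈ X, rAvoid G Z a b → a = b)
    (hsol : ∀ p ∈ 𝒯, ¬ rAvoid G Z p.1 p.2)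
    (hcomp : (∃ p ∈ 𝒯, G.Reachable x p.1 ∧ G.Reachable x p.2) ∨
      (∃ a ∈ X, ∃ b ∈ X, a ≠ b ∧ G.Reachable x a ∧ G.Reachable x b)) :
    ∃ z ∈ Z, ∃ c, rAvoid G Z x c ∧ G.Adj c z := by
  by_contra hno
  push_neg at hno
  have key : ∀ a b : V, G.Walk a b → rAvoid G Z x a → rAvoid G Z x b := by
    intro a b W
    induction W with
    | nil => exact id
    | @cons u v w h p ih =>
        intro hxa
        have huZ : u ∉ Z := rAvoid_notMem hxa hxZ
        have hvZ : v ∉ Z := by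
          intro hvZ
          exact hno v hvZ u hxa h
        exact ih (hxa.tail ⟨h, huZ, hvZ⟩)
  have key' : ∀ b : V, G.Reachable x b → rAvoid G Z x b := fun b hb =>
    hb.elim fun W => key x b W .refl
  rcases hcomp with ⟨p, hp, h1, h2⟩ | ⟨a, ha, b, hb, hab, h1, h2⟩
  · exact hsol p hp ((rAvoid_symm (key' _ h1)).trans (key' _ h2))
  · exact hab (hmwc a ha b hb ((rAvoid_symm (key' _ h1)).trans (key' _ h2)))

theorem stmt_8 [Fintype V] (G : SimpleGraph V) (𝒯 : Set (V × V)) (X : Set V)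
    (k : ℕ) (hk : 1 ≤ k)
    -- `X ⊆ V(G) ∖ T`
    (hXT : ∀ x ∈ X, x ∉ termSet 𝒯)
    -- `X` is an independent set
    (hXind : ∀ x ∈ X, ∀ y ∈ X, ¬ G.Adj x y)
    -- `Z ⊆ V(G) ∖ (X ∪ T)` with `|Z| ≤ k`
    (Z : Set V) (hZ : ∀ z ∈ Z, z ∉ X ∧ z ∉ termSet 𝒯) (hZcard : Z.ncard ≤ k)
    -- `Z` is a multiway cut for `X`
    (hmwc : ∀ x ∈ X, ∀ y ∈ X, rAvoid G Z x y → x = y)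
    -- no terminal pair is connected in `G − Z`
    (hsol : ∀ p ∈ 𝒯, ¬ rAvoid G Z p.1 p.2)
    -- (i) no vertex `v ∉ X` has a fan of `k+2` paths to distinct vertices of `X`,
    -- pairwise vertex-disjoint except for `v`
    (hnofan : ¬ ∃ v : V, v ∉ X ∧ ∃ y : Fin (k + 2) → V,
      Function.Injective y ∧ (∀ i, y i ∈ X) ∧
      ∃ P : ∀ i : Fin (k + 2), G.Walk v (y i),
        (∀ i, (P i).IsPath) ∧
        ∀ i j : Fin (k + 2), i ≠ j →
          ∀ w : V, w ∈ (P i).support → w ∈ (P j).support → w = v)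
    -- (ii) every connected component of `G` contains both vertices of a terminal
    -- pair, or at least two vertices of `X`
    (hcomp : ∀ v : V,
      (∃ p ∈ 𝒯, G.Reachable v p.1 ∧ G.Reachable v p.2) ∨
      (∃ x ∈ X, ∃ y ∈ X, x ≠ y ∧ G.Reachable v x ∧ G.Reachable v y)) :
    X.ncard ≤ k * (k + 1) := by
  classical
  by_contra hbig
  push_neg at hbig
  -- choose for each x ∈ X an attachment vertex in Z
  have hatt : ∀ x ∈ X, ∃ z ∈ Z, ∃ c, rAvoid G Z x c ∧ G.Adj c z := by
    intro x hx
    exact attach_lemma hx (fun hxZ => (hZ x hxZ).1 hx) hmwc hsol (hcomp x)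
  choose! f hfZ c hc hadj using hatt
  -- pigeonhole
  have hXfin : X.Finite := Set.toFinite X
  have hZfin : Z.Finite := Set.toFinite Z
  have hmaps : ∀ a ∈ hXfin.toFinset, f a ∈ hZfin.toFinset := by
    intro a ha
    simp only [Set.Finite.mem_toFinset] at *
    exact hfZ a ha
  have hcard : hZfin.toFinset.card * (k + 1) < hXfin.toFinset.card := by
    rw [← Set.ncard_eq_toFinset_card _ hZfin, ← Set.ncard_eq_toFinset_card _ hXfin]
    calc Z.ncard * (k+1) ≤ k * (k+1) := Nat.mul_le_mul_right _ hZcard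
      _ < X.ncard := hbig
  obtain ⟨z, hz, hzbig⟩ :=
    Finset.exists_lt_card_fiber_of_mul_lt_card_of_maps_to hmaps hcard
  rw [Set.Finite.mem_toFinset] at hz
  set F := hXfin.toFinset.filter (fun x => f x = z) with hF
  obtain ⟨t, hts, htcard⟩ := Finset.exists_subset_card_eq hzbig
  have e := t.equivFinOfCardEq htcard
  set y : Fin (k + 2) → V := fun i => ((e.symm i : t) : V) with hy
  have hyinj : Function.Injective y :=
    Subtype.val_injective.comp e.symm.injective
  have hymem : ∀ i, y i ∈ F := fun i => by
    have := (e.symm i).2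
    exact hts this
  have hyX : ∀ i, y i ∈ X := fun i => by
    have := hymem i
    rw [hF, Finset.mem_filter, Set.Finite.mem_toFinset] at this
    exact this.1
  have hyf : ∀ i, f (y i) = z := fun i => by
    have := hymem i
    rw [hF, Finset.mem_filter] at this
    exact this.2
  -- build the fan
  apply hnofan
  refine ⟨z, (hZ z hz).1, y, hyinj, hyX, ?_⟩
  have hW : ∀ i, ∃ W : G.Walk (y i) (c (y i)), ∀ w ∈ W.support, rAvoid G Z (y i) w :=
    fun i => rAvoid_exists_walk (hc (y i) (hyX i))
  choose W hWsup using hW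
  have hadj' : ∀ i, G.Adj z (c (y i)) := fun i => by
    have := hadj (y i) (hyX i); rw [hyf i] at this; exact this.symm
  set Q : ∀ i : Fin (k + 2), G.Walk z (y i) :=
    fun i => ((SimpleGraph.Walk.cons (hadj' i) (W i).reverse)).bypass with hQ
  refine ⟨Q, fun i => SimpleGraph.Walk.bypass_isPath _, ?_⟩
  have hQsup : ∀ i, ∀ w ∈ (Q i).support, w = z ∨ rAvoid G Z (y i) w := by
    intro i w hw
    have hw' := SimpleGraph.Walk.support_bypass_subset _ hw
    rw [SimpleGraph.Walk.support_cons, List.mem_cons,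
        SimpleGraph.Walk.support_reverse, List.mem_reverse] at hw'
    rcases hw' with hw' | hw'
    · exact Or.inl hw'
    · exact Or.inr (hWsup i w hw')
  intro i j hij w hwi hwj
  rcases hQsup i w hwi with h1 | h1
  · exact h1
  rcases hQsup j w hwj with h2 | h2
  · exact h2
  exact absurd (hyinj (hmwc _ (hyX i) _ (hyX j) (h1.trans (rAvoid_symm h2)))) hij
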